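/- Let a unit square (arbitrary orientation) have its center at a point of a rectangular table whose sides both have length at least √2. Cut the square by the horizontal and vertical lines through its center into four pieces of area 1/4 each. Then at least one of these four pieces is entirely contained in the table. -/
import Mathlib


open Real MeasureTheory

lemma abs_comb_le (c s x y : ℝ) (h : c ^ 2 + s ^ 2 = 1)
    (hx : |x| ≤ 1 / 2) (hy : |y| ≤ 1 / 2) : |c * x - s * y| ≤ Real.sqrt 2 / 2 := by
  have h2 : Real.sqrt 2 ^ 2 = 2 := Real.sq_sqrt (by norm_num)
  have h0 : (0:ℝ) ≤ Real.sqrt 2 := Real.sqrt_nonneg 2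
  have hcs : |c| + |s| ≤ Real.sqrt 2 := by
    nlinarith [abs_nonneg c, abs_nonneg s, sq_abs c, sq_abs s, sq_nonneg (|c| - |s|)]
  have h1 : |c * x - s * y| ≤ |c| * |x| + |s| * |y| := by
    calc |c * x - s * y| ≤ |c * x| + |s * y| := abs_sub _ _
      _ = |c| * |x| + |s| * |y| := by rw [abs_mul, abs_mul]
  nlinarith [abs_nonneg c, abs_nonneg s, abs_nonneg x, abs_nonneg y]

lemma oneD (L c r : ℝ) (hr : 0 ≤ r) (hL : 2 * r ≤ L) (h0 : 0 ≤ c) (hc : c ≤ L) :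
    ∃ ε : ℝ, (ε = 1 ∨ ε = -1) ∧
      ∀ t : ℝ, |t - c| ≤ r → 0 ≤ ε * (t - c) → t ∈ Set.Icc (0:ℝ) L := by
  rcases le_or_gt c (L - r) with h | h
  · refine ⟨1, Or.inl rfl, fun t ht hε => ?_⟩
    have := abs_le.1 ht
    exact ⟨by nlinarith, by nlinarith⟩
  · refine ⟨-1, Or.inr rfl, fun t ht hε => ?_⟩
    have := abs_le.1 ht
    exact ⟨by nlinarith, by nlinarith⟩

/-- The unit square centered at `c`, rotated by `θ`. -/
def unitSquare (c : ℝ × ℝ) (θ : ℝ) : Set (ℝ × ℝ) :=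
  {p | |Real.cos θ * (p.1 - c.1) + Real.sin θ * (p.2 - c.2)| ≤ 1 / 2 ∧
       |(-Real.sin θ) * (p.1 - c.1) + Real.cos θ * (p.2 - c.2)| ≤ 1 / 2}

/-- Let a unit square with arbitrary orientation be centered at a point `p` of a table
`T = [0,a] × [0,b]` with `a, b ≥ √2`.  Cut the square by the axis-parallel cross through
`p` into four pieces.  Then at least one of the four pieces is entirely contained in the
table. -/
theorem some_quarter_piece_in_table (a b : ℝ)
    (ha : Real.sqrt 2 ≤ a) (hb : Real.sqrt 2 ≤ b)
    (p : ℝ × ℝ) (hp : p ∈ Set.Icc (0 : ℝ) a ×ˢ Set.Icc (0 : ℝ) b) (θ : ℝ) :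
    ∃ ε δ : ℝ, (ε = 1 ∨ ε = -1) ∧ (δ = 1 ∨ δ = -1) ∧
      unitSquare p θ ∩ {q : ℝ × ℝ | 0 ≤ ε * (q.1 - p.1) ∧ 0 ≤ δ * (q.2 - p.2)} ⊆
        Set.Icc (0 : ℝ) a ×ˢ Set.Icc (0 : ℝ) b := by
  obtain ⟨⟨hp1, hp1'⟩, ⟨hp2, hp2'⟩⟩ := hp
  have hpyth : Real.cos θ ^ 2 + Real.sin θ ^ 2 = 1 := Real.cos_sq_add_sin_sq θ
  have key : ∀ q ∈ unitSquare p θ,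
      |q.1 - p.1| ≤ Real.sqrt 2 / 2 ∧ |q.2 - p.2| ≤ Real.sqrt 2 / 2 := by
    intro q hq
    obtain ⟨hx, hy⟩ := hq
    constructor
    · have hid : q.1 - p.1 = Real.cos θ * (Real.cos θ * (q.1 - p.1) + Real.sin θ * (q.2 - p.2)) -
          Real.sin θ * (-Real.sin θ * (q.1 - p.1) + Real.cos θ * (q.2 - p.2)) := by
        linear_combination (-(q.1 - p.1)) * hpyth
      rw [hid]
      exact abs_comb_le _ _ _ _ hpyth hx hy
    · have hid : q.2 - p.2 = Real.cos θ * (-Real.sin θ * (q.1 - p.1) + Real.cos θ * (q.2 - p.2)) -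
          (-Real.sin θ) * (Real.cos θ * (q.1 - p.1) + Real.sin θ * (q.2 - p.2)) := by
        linear_combination (-(q.2 - p.2)) * hpyth
      rw [hid]
      exact abs_comb_le _ _ _ _ (by linear_combination hpyth) hy hx
  have h2 : Real.sqrt 2 ^ 2 = 2 := Real.sq_sqrt (by norm_num)
  have h0 : (0:ℝ) ≤ Real.sqrt 2 := Real.sqrt_nonneg 2
  obtain ⟨ε, hε, hεs⟩ := oneD a p.1 (Real.sqrt 2 / 2) (by positivity) (by linarith) hp1 hp1'
  obtain ⟨δ, hδ, hδs⟩ := oneD b p.2 (Real.sqrt 2 / 2) (by positivity) (by linarith) hp2 hp2'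
  refine ⟨ε, δ, hε, hδ, ?_⟩
  rintro q ⟨hq, hq1, hq2⟩
  obtain ⟨k1, k2⟩ := key q hq
  exact ⟨hεs q.1 k1 hq1, hδs q.2 k2 hq2⟩
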